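/- arXiv:2401.15684 — 7 statements merged into one kernel-verified Lean document; each statement's English description precedes it below -/
import Mathlib

section
/- Every twice differentiable function f : ℝ → ℝ satisfying f''(x) = 8π(1 − exp(f(x))) for all x ∈ ℝ is periodic: there exists T > 0 such that f(x + T) = f(x) for all x ∈ ℝ. -/
/-!
The equation is `f'' = φ(f)` with `φ y = 8π(1 - eʸ)` a strictly decreasing restoring force
vanishing at `0`. Such a solution has a critical point on every ray `[a, ∞)`: if `f' > 0` there,
then either `f` climbs above `0` at some `x₀`, after which `f'' ≤ φ(f(x₀)) < 0` and `f'` turns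
negative, or `f ≤ 0` throughout, so that `f' ≥ f'(a)` and `f` grows linearly; the case
`f' < 0` is the same for `-f`. By time-reversibility and uniqueness for the locally Lipschitz
system `(f, f')' = (f', φ(f))`, the graph of `f` is symmetric about every critical point, and
the composition of the reflections about two distinct critical points `c₁ < c₂` is the
translation by `2(c₂ - c₁)`.
-/

open Real Set

theorem ODE_solution_unique_univ_of_locallyLipschitz {E : Type*} [NormedAddCommGroup E]
    [NormedSpace ℝ E] {v : E → E} {f g : ℝ → E} {t₀ : ℝ} (hv : LocallyLipschitz v)
    (hf : ∀ t, HasDerivAt f (v (f t)) t) (hg : ∀ t, HasDerivAt g (v (g t)) t)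
    (heq : f t₀ = g t₀) : f = g := by
  funext t
  have hfc : Continuous f := continuous_iff_continuousAt.2 fun t => (hf t).continuousAt
  have hgc : Continuous g := continuous_iff_continuousAt.2 fun t => (hg t).continuousAt
  set I := Icc (min t t₀ - 1) (max t t₀ + 1)
  obtain ⟨K, hK⟩ := hv.locallyLipschitzOn.exists_lipschitzOnWith_of_compact
    ((isCompact_Icc.image hfc).union (isCompact_Icc.image hgc) : IsCompact (f '' I ∪ g '' I))
  refine ODE_solution_unique_of_mem_Icc (v := fun _ => v) (s := fun _ => f '' I ∪ g '' I)
    (fun _ _ => hK) ?_ hfc.continuousOn (fun t _ => hf t)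
    (fun t ht => .inl ⟨t, Ioo_subset_Icc_self ht, rfl⟩) hgc.continuousOn (fun t _ => hg t)
    (fun t ht => .inr ⟨t, Ioo_subset_Icc_self ht, rfl⟩) heq ?_
  · constructor <;> linarith [min_le_right t t₀, le_max_right t t₀]
  · constructor <;> linarith [min_le_left t t₀, le_max_left t t₀]

theorem mul_sub_le_sub_of_le_hasDerivAt {g g' : ℝ → ℝ} {a m : ℝ}
    (hg : ∀ x, HasDerivAt g (g' x) x) (hm : ∀ x ≥ a, m ≤ g' x) {x : ℝ} (hx : a ≤ x) :
    m * (x - a) ≤ g x - g a := by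
  refine (convex_Ici a).mul_sub_le_image_sub_of_le_deriv
    (fun y _ => (hg y).continuousAt.continuousWithinAt)
    (fun y _ => (hg y).differentiableAt.differentiableWithinAt) (fun y hy => ?_)
    a self_mem_Ici x hx hx
  rw [interior_Ici] at hy
  rw [(hg y).deriv]
  exact hm y (le_of_lt hy)

section RestoringForce

variable {φ f f' : ℝ → ℝ}

theorem exists_ge_deriv_nonpos (hφ : StrictAnti φ) (hφ0 : φ 0 = 0)
    (hf : ∀ x, HasDerivAt f (f' x) x) (hf' : ∀ x, HasDerivAt f' (φ (f x)) x) (a : ℝ) :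
    ∃ x ≥ a, f' x ≤ 0 := by
  by_contra! hpos
  have hmono : ∀ x ≥ a, ∀ y ≥ x, f x ≤ f y := fun x hx y hy => by
    have := mul_sub_le_sub_of_le_hasDerivAt hf (fun z hz => (hpos z (hx.trans hz)).le) hy
    linarith
  by_cases hfpos : ∃ x₀ ≥ a, 0 < f x₀
  · obtain ⟨x₀, hx₀, hfx₀⟩ := hfpos
    have hneg : φ (f x₀) < 0 := hφ0 ▸ hφ hfx₀
    have hdecay : ∀ x ≥ x₀, f' x - f' x₀ ≤ φ (f x₀) * (x - x₀) := fun x hx => by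
      have := mul_sub_le_sub_of_le_hasDerivAt (fun y => (hf' y).neg)
        (fun y hy => neg_le_neg (hφ.antitone (hmono x₀ hx₀ y hy))) hx
      simp only [Pi.neg_apply] at this
      linarith
    set x := x₀ + f' x₀ / -φ (f x₀)
    have hx : x₀ ≤ x := le_add_of_nonneg_right (div_nonneg (hpos x₀ hx₀).le (by linarith))
    have hslope : φ (f x₀) * (x - x₀) = -f' x₀ := by
      simp only [x, add_sub_cancel_left]
      field_simp [hneg.ne]
    linarith [hdecay x hx, hpos x (hx₀.trans hx)]
  · push Not at hfpos
    have hderiv_ge : ∀ x ≥ a, f' a ≤ f' x := fun x hx => by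
      have := mul_sub_le_sub_of_le_hasDerivAt hf'
        (fun y hy => hφ0 ▸ hφ.antitone (hfpos y hy)) hx
      linarith
    have hgrowth : ∀ x ≥ a, f' a * (x - a) ≤ f x - f a :=
      fun _ => mul_sub_le_sub_of_le_hasDerivAt hf hderiv_ge
    set x := a + (1 - f a) / f' a
    have hx : a ≤ x := le_add_of_nonneg_right (div_nonneg (by linarith [hfpos a le_rfl])
      (hpos a le_rfl).le)
    have hslope : f' a * (x - a) = 1 - f a := by
      simp only [x, add_sub_cancel_left]
      field_simp [(hpos a le_rfl).ne']
    linarith [hgrowth x hx, hfpos x hx]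

theorem exists_ge_deriv_eq_zero (hφ : StrictAnti φ) (hφ0 : φ 0 = 0)
    (hf : ∀ x, HasDerivAt f (f' x) x) (hf' : ∀ x, HasDerivAt f' (φ (f x)) x) (a : ℝ) :
    ∃ x ≥ a, f' x = 0 := by
  obtain ⟨x, hx, hfx⟩ := exists_ge_deriv_nonpos hφ hφ0 hf hf' a
  obtain ⟨y, hy, hfy⟩ := exists_ge_deriv_nonpos (φ := fun u => -φ (-u)) (f := -f) (f' := -f')
    (fun _ _ huv => neg_lt_neg (hφ (neg_lt_neg huv))) (by simp [hφ0])
    (fun x => (hf x).neg) (fun x => by simpa using (hf' x).neg) a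
  have hcont : ContinuousOn f' (Ici a) := fun x _ =>
    (hf' x).continuousAt.continuousWithinAt
  obtain ⟨z, hz, hz0⟩ := isPreconnected_Ici.intermediate_value hx hy hcont
    ⟨hfx, by simpa using hfy⟩
  exact ⟨z, hz, hz0⟩

theorem eq_two_mul_sub_of_deriv_eq_zero (hφ : LocallyLipschitz φ)
    (hf : ∀ x, HasDerivAt f (f' x) x) (hf' : ∀ x, HasDerivAt f' (φ (f x)) x) {c : ℝ}
    (hc : f' c = 0) (x : ℝ) : f (2 * c - x) = f x := by
  have huniq := ODE_solution_unique_univ_of_locallyLipschitz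
    (v := fun p : ℝ × ℝ => (p.2, φ p.1)) (t₀ := c)
    (f := fun t => (f (2 * c - t), -f' (2 * c - t))) (g := fun t => (f t, f' t))
    (LipschitzWith.prod_snd.locallyLipschitz.prodMk
      (hφ.comp LipschitzWith.prod_fst.locallyLipschitz))
    (fun t => by
      have hreflect : HasDerivAt (fun t : ℝ => 2 * c - t) (-1) t := by
        simpa using (hasDerivAt_id t).const_sub (2 * c)
      simpa using ((hf _).comp t hreflect).prodMk ((hf' _).comp t hreflect).neg)
    (fun t => (hf t).prodMk (hf' t)) (by simp [two_mul, hc])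
  exact congrArg Prod.fst (congrFun huniq x)

theorem exists_periodic_of_restoring (hφ : StrictAnti φ) (hφ0 : φ 0 = 0)
    (hφL : LocallyLipschitz φ) (hf : ∀ x, HasDerivAt f (f' x) x)
    (hf' : ∀ x, HasDerivAt f' (φ (f x)) x) : ∃ T > 0, Function.Periodic f T := by
  obtain ⟨c₁, -, hc₁⟩ := exists_ge_deriv_eq_zero hφ hφ0 hf hf' 0
  obtain ⟨c₂, hc₂, hc₂'⟩ := exists_ge_deriv_eq_zero hφ hφ0 hf hf' (c₁ + 1)
  refine ⟨2 * (c₂ - c₁), by linarith, fun x => ?_⟩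
  calc f (x + 2 * (c₂ - c₁)) = f (2 * c₂ - (2 * c₁ - x)) := by ring_nf
    _ = f (2 * c₁ - x) := eq_two_mul_sub_of_deriv_eq_zero hφL hf hf' hc₂' _
    _ = f x := eq_two_mul_sub_of_deriv_eq_zero hφL hf hf' hc₁ x

end RestoringForce

/-- Every twice differentiable solution `f : ℝ → ℝ` of `f'' = 8π(1 − e^f)` on all
of `ℝ` is periodic: there is `T > 0` with `f(x + T) = f(x)` for all `x`. -/
theorem solution_periodic
    (f f' : ℝ → ℝ)
    (hf : ∀ x, HasDerivAt f (f' x) x)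
    (hf' : ∀ x, HasDerivAt f' (8 * π * (1 - Real.exp (f x))) x) :
    ∃ T > 0, ∀ x, f (x + T) = f x := by
  have hφ : StrictAnti fun y => 8 * π * (1 - Real.exp y) := fun _ _ h =>
    mul_lt_mul_of_pos_left (sub_lt_sub_left (exp_lt_exp.2 h) 1) (by positivity)
  have hφL : LocallyLipschitz fun y => 8 * π * (1 - Real.exp y) :=
    ContDiff.locallyLipschitz (𝕂 := ℝ) (by fun_prop)
  exact exists_periodic_of_restoring hφ (by simp) hφL hf hf'
end

section
/- Let E > 0, β > 0, and let f : ℝ → ℝ be twice differentiable on [0, β] with f''(x) = 8π(1 − exp(f(x))) for all x ∈ [0, β], f(0) = f(β) = 0, f(x) < 0 for all x ∈ (0, β), f'(0) = −√(2E) and f'(β) = √(2E). Then √(2E)/(4π) = β − ∫₀^β exp(f(x)) dx, and consequently √(2E)/(4π) < β. In particular, the period T(E) of the periodic orbit of f'' = 8π(1 − e^f) with energy E satisfies T(E) ≥ β > √(2E)/(4π), so T(E) → ∞ as E → ∞. -/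
open Real intervalIntegral

/-- Integrating `f'' = 8π(1 − e^f)` over `[0, β]` for the arc of the orbit with
energy `E` that starts and ends on `{f = 0}` with `f'(0) = −√(2E)`,
`f'(β) = √(2E)`, gives `√(2E)/(4π) = β − ∫₀^β e^{f}`; consequently
`√(2E)/(4π) < β`. -/
theorem sqrt_two_energy_lt_period
    (E β : ℝ) (hE : 0 < E) (hβ : 0 < β)
    (f f' : ℝ → ℝ)
    (hf : ∀ x ∈ Set.Icc 0 β, HasDerivWithinAt f (f' x) (Set.Icc 0 β) x)
    (hf' : ∀ x ∈ Set.Icc 0 β,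
      HasDerivWithinAt f' (8 * π * (1 - Real.exp (f x))) (Set.Icc 0 β) x)
    (h0 : f 0 = 0) (hβ0 : f β = 0)
    (hneg : ∀ x ∈ Set.Ioo 0 β, f x < 0)
    (hf'0 : f' 0 = -Real.sqrt (2 * E))
    (hf'β : f' β = Real.sqrt (2 * E)) :
    Real.sqrt (2 * E) / (4 * π) = β - ∫ x in (0:ℝ)..β, Real.exp (f x) ∧
      Real.sqrt (2 * E) / (4 * π) < β := by
  have hfc : ContinuousOn f (Set.Icc 0 β) := fun x hx =>
    (hf x hx).continuousWithinAt
  have hf'c : ContinuousOn f' (Set.Icc 0 β) := fun x hx =>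
    (hf' x hx).continuousWithinAt
  have hgc : ContinuousOn (fun x => 8 * π * (1 - Real.exp (f x))) (Set.Icc 0 β) :=
    (continuousOn_const.mul (continuousOn_const.sub (Real.continuousOn_exp.comp hfc
      (Set.mapsTo_image f _)))) -- fix below
  have hint : IntervalIntegrable (fun x => 8 * π * (1 - Real.exp (f x)))
      MeasureTheory.volume 0 β := by
    apply ContinuousOn.intervalIntegrable
    rw [Set.uIcc_of_le hβ.le]
    exact hgc
  have key : ∫ x in (0:ℝ)..β, 8 * π * (1 - Real.exp (f x)) = f' β - f' 0 := by
    apply intervalIntegral.integral_eq_sub_of_hasDeriv_right_of_le hβ.le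
    · exact hf'c
    · intro x hx
      exact ((hf' x (Set.Ioo_subset_Icc_self hx)).hasDerivAt
        (Icc_mem_nhds hx.1 hx.2)).hasDerivWithinAt
    · exact hint
  rw [hf'β, hf'0, sub_neg_eq_add] at key
  have hefc : ContinuousOn (fun x => Real.exp (f x)) (Set.Icc 0 β) :=
    Real.continuous_exp.comp_continuousOn hfc
  have hefint : IntervalIntegrable (fun x => Real.exp (f x))
      MeasureTheory.volume 0 β := by
    apply ContinuousOn.intervalIntegrable
    rw [Set.uIcc_of_le hβ.le]
    exact hefc
  have hsplit : ∫ x in (0:ℝ)..β, 8 * π * (1 - Real.exp (f x))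
      = 8 * π * (β - ∫ x in (0:ℝ)..β, Real.exp (f x)) := by
    rw [intervalIntegral.integral_const_mul,
      intervalIntegral.integral_sub intervalIntegrable_const hefint,
      intervalIntegral.integral_const, smul_eq_mul]
    ring
  have hπ : (0:ℝ) < π := Real.pi_pos
  have heq : Real.sqrt (2 * E) / (4 * π) = β - ∫ x in (0:ℝ)..β, Real.exp (f x) := by
    rw [hsplit] at key
    rw [eq_sub_iff_add_eq, div_add' _ _ _ (by positivity : (4:ℝ)*π ≠ 0),
      div_eq_iff (by positivity : (4:ℝ)*π ≠ 0)]
    nlinarith [key]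
  refine ⟨heq, ?_⟩
  rw [heq]
  have hpos : 0 < ∫ x in (0:ℝ)..β, Real.exp (f x) := by
    apply intervalIntegral.intervalIntegral_pos_of_pos_on hefint
    · intro x _; exact Real.exp_pos _
    · exact hβ
  linarith
end

section
/- For every real number a > √(π/2) there exists a nonconstant, twice continuously differentiable function f : ℝ → ℝ such that f''(x) = 8π(1 − exp(f(x))) for all x ∈ ℝ and f(x + a) = f(x) for all x ∈ ℝ. -/
/-!
Write the potential `V(y) = 8π(e^y − y − 1)` of `f'' = −V'(f)` as `V = W²` with
`W(y) = 2√π · y · √q(y)` and `q(y) = 2∫₀¹ (1 − t) e^{ty} dt > 0`, so that `W` is an increasing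
`C¹` bijection of `ℝ` with `W' > 0`. The orbit of energy `E` is then `W(f) = √E sin θ`,
`f' = √(2E) cos θ`, where the angle obeys `θ' = √2 W'(f)`: time is `∫ dθ / θ'`, and the period is
`T(E) = ∫₀^{2π} dθ / θ'`. The period is continuous in `E`, `T(0) = √(π/2)`, and `T(E) ≥ √E / 16`
since `|W| W' = 4π(1 − e^y) ≤ 4π` where `W < 0`; the intermediate value theorem gives `T(E) = a`.
-/

open Real Set Filter MeasureTheory intervalIntegral

noncomputable section

theorem OrderIso.hasDerivAt_symm (e : ℝ ≃o ℝ) {z f' : ℝ} (he : HasDerivAt e f' (e.symm z))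
    (hf' : f' ≠ 0) : HasDerivAt e.symm f'⁻¹ z :=
  he.of_local_left_inverse e.symm.continuous.continuousAt hf'
    (Eventually.of_forall e.apply_symm_apply)

theorem sin_le_neg_sqrt_two_div_two {τ : ℝ} (h₁ : 5 * π / 4 ≤ τ) (h₂ : τ ≤ 7 * π / 4) :
    sin τ ≤ -(√2 / 2) := by
  have h : cos (π / 4) ≤ cos (τ - π - π / 2) := by
    rw [← cos_abs (τ - π - π / 2)]
    exact cos_le_cos_of_nonneg_of_le_pi (abs_nonneg _) (by linarith [pi_pos])
      (abs_le.2 ⟨by linarith, by linarith⟩)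
  rw [cos_pi_div_four, cos_sub_pi_div_two, sin_sub_pi] at h
  linarith

/-- A square root `W` of a potential `V = W²`, normalised to be an increasing `C¹` bijection. -/
structure PotentialRoot where
  toOrderIso : ℝ ≃o ℝ
  derivative : ℝ → ℝ
  hasDerivAt : ∀ y, HasDerivAt toOrderIso (derivative y) y
  continuous_derivative : Continuous derivative
  derivative_pos : ∀ y, 0 < derivative y

namespace PotentialRoot

instance : CoeFun PotentialRoot (fun _ => ℝ → ℝ) := ⟨fun w => w.toOrderIso⟩

variable (w : PotentialRoot)

def angularSpeed (E θ : ℝ) : ℝ := √2 * w.derivative (w.toOrderIso.symm (√E * sin θ))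

def timeOfAngle (E θ : ℝ) : ℝ := ∫ τ in (0 : ℝ)..θ, (w.angularSpeed E τ)⁻¹

def period (E : ℝ) : ℝ := w.timeOfAngle E (2 * π)

lemma angularSpeed_pos (E θ : ℝ) : 0 < w.angularSpeed E θ :=
  mul_pos (by positivity) (w.derivative_pos _)

lemma continuous_uncurry_inv_angularSpeed :
    Continuous fun p : ℝ × ℝ => (w.angularSpeed p.1 p.2)⁻¹ := by
  refine Continuous.inv₀ ?_ fun p => (w.angularSpeed_pos p.1 p.2).ne'
  have := w.continuous_derivative
  have := w.toOrderIso.symm.continuous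
  unfold angularSpeed
  fun_prop

lemma continuous_inv_angularSpeed (E : ℝ) : Continuous fun θ => (w.angularSpeed E θ)⁻¹ :=
  w.continuous_uncurry_inv_angularSpeed.comp (continuous_const.prodMk continuous_id)

lemma periodic_inv_angularSpeed (E : ℝ) :
    Function.Periodic (fun θ => (w.angularSpeed E θ)⁻¹) (2 * π) := by
  intro θ
  simp only [angularSpeed, sin_add_two_pi]

lemma continuous_period : Continuous w.period :=
  continuous_parametric_intervalIntegral_of_continuous' w.continuous_uncurry_inv_angularSpeed _ _

lemma hasDerivAt_timeOfAngle (E θ : ℝ) :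
    HasDerivAt (w.timeOfAngle E) (w.angularSpeed E θ)⁻¹ θ :=
  integral_hasDerivAt_right ((w.continuous_inv_angularSpeed E).intervalIntegrable _ _)
    ((w.continuous_inv_angularSpeed E).stronglyMeasurableAtFilter _ _)
    (w.continuous_inv_angularSpeed E).continuousAt

lemma timeOfAngle_strictMono (E : ℝ) : StrictMono (w.timeOfAngle E) :=
  strictMono_of_hasDerivAt_pos (w.hasDerivAt_timeOfAngle E) fun θ =>
    inv_pos.2 (w.angularSpeed_pos E θ)

lemma timeOfAngle_add_two_pi (E θ : ℝ) :
    w.timeOfAngle E (θ + 2 * π) = w.timeOfAngle E θ + w.period E := by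
  have := (w.periodic_inv_angularSpeed E).intervalIntegral_add_eq_add 0 θ
    fun _ _ => (w.continuous_inv_angularSpeed E).intervalIntegrable (μ := volume) _ _
  rwa [zero_add] at this

lemma continuous_timeOfAngle (E : ℝ) : Continuous (w.timeOfAngle E) :=
  continuous_iff_continuousAt.2 fun θ => (w.hasDerivAt_timeOfAngle E θ).continuousAt

lemma timeOfAngle_surjective (E : ℝ) : Function.Surjective (w.timeOfAngle E) := by
  have hint := (w.continuous_inv_angularSpeed E).intervalIntegrable (μ := volume) 0 (2 * π)
  have hpos (θ : ℝ) : 0 < (w.angularSpeed E θ)⁻¹ := inv_pos.2 (w.angularSpeed_pos E θ)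
  have h2π : (0 : ℝ) < 2 * π := by positivity
  exact (w.continuous_timeOfAngle E).surjective
    ((w.periodic_inv_angularSpeed E).tendsto_atTop_intervalIntegral_of_pos' hint hpos h2π)
    ((w.periodic_inv_angularSpeed E).tendsto_atBot_intervalIntegral_of_pos' hint hpos h2π)

def timeOfAngleOrderIso (E : ℝ) : ℝ ≃o ℝ :=
  StrictMono.orderIsoOfSurjective _ (w.timeOfAngle_strictMono E) (w.timeOfAngle_surjective E)

def angle (E : ℝ) : ℝ → ℝ := (w.timeOfAngleOrderIso E).symm

def orbit (E x : ℝ) : ℝ := w.toOrderIso.symm (√E * sin (w.angle E x))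

def velocity (E x : ℝ) : ℝ := √2 * √E * cos (w.angle E x)

lemma timeOfAngle_angle (E x : ℝ) : w.timeOfAngle E (w.angle E x) = x :=
  (w.timeOfAngleOrderIso E).apply_symm_apply x

lemma angle_surjective (E : ℝ) : Function.Surjective (w.angle E) :=
  (w.timeOfAngleOrderIso E).symm.surjective

lemma angle_add_period (E x : ℝ) : w.angle E (x + w.period E) = w.angle E x + 2 * π :=
  (w.timeOfAngle_strictMono E).injective <| by
    rw [timeOfAngle_add_two_pi, timeOfAngle_angle, timeOfAngle_angle]

lemma hasDerivAt_angle (E x : ℝ) :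
    HasDerivAt (w.angle E) (w.angularSpeed E (w.angle E x)) x := by
  have h := (w.timeOfAngleOrderIso E).hasDerivAt_symm (z := x) (w.hasDerivAt_timeOfAngle E _)
    (inv_pos.2 (w.angularSpeed_pos E _)).ne'
  rw [inv_inv] at h
  exact h

lemma hasDerivAt_symm (z : ℝ) :
    HasDerivAt w.toOrderIso.symm (w.derivative (w.toOrderIso.symm z))⁻¹ z :=
  w.toOrderIso.hasDerivAt_symm (w.hasDerivAt _) (w.derivative_pos _).ne'

lemma hasDerivAt_orbit (E x : ℝ) : HasDerivAt (w.orbit E) (w.velocity E x) x := by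
  have h := (w.hasDerivAt_symm _).comp x
    (((hasDerivAt_sin _).comp x (w.hasDerivAt_angle E x)).const_mul √E)
  refine h.congr_deriv ?_
  have := (w.derivative_pos (w.orbit E x)).ne'
  simp only [velocity, angularSpeed, orbit, Function.comp_apply] at *
  field_simp

lemma apply_orbit (E x : ℝ) : w (w.orbit E x) = √E * sin (w.angle E x) :=
  w.toOrderIso.apply_symm_apply _

lemma hasDerivAt_velocity (E x : ℝ) :
    HasDerivAt (w.velocity E) (-(2 * w (w.orbit E x) * w.derivative (w.orbit E x))) x := by
  have h := ((hasDerivAt_cos _).comp x (w.hasDerivAt_angle E x)).const_mul (√2 * √E)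
  refine h.congr_deriv ?_
  have h2 : √2 * √2 = 2 := mul_self_sqrt zero_le_two
  rw [apply_orbit, angularSpeed, ← orbit]
  linear_combination (-(√E * sin (w.angle E x) * w.derivative (w.orbit E x))) * h2

lemma continuous_orbit (E : ℝ) : Continuous (w.orbit E) :=
  continuous_iff_continuousAt.2 fun x => (w.hasDerivAt_orbit E x).continuousAt

lemma deriv_orbit (E : ℝ) : deriv (w.orbit E) = w.velocity E :=
  funext fun x => (w.hasDerivAt_orbit E x).deriv

lemma deriv_deriv_orbit (E x : ℝ) :
    deriv (deriv (w.orbit E)) x = -(2 * w (w.orbit E x) * w.derivative (w.orbit E x)) := by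
  rw [deriv_orbit]
  exact (w.hasDerivAt_velocity E x).deriv

lemma contDiff_two_orbit (E : ℝ) : ContDiff ℝ 2 (w.orbit E) := by
  rw [show (2 : WithTop ℕ∞) = 1 + 1 from rfl, contDiff_succ_iff_deriv, deriv_orbit,
    contDiff_one_iff_deriv, funext fun x => (w.hasDerivAt_velocity E x).deriv]
  refine ⟨fun x => (w.hasDerivAt_orbit E x).differentiableAt, by simp,
    fun x => (w.hasDerivAt_velocity E x).differentiableAt, ?_⟩
  have := w.continuous_derivative
  have := w.toOrderIso.continuous
  have := w.continuous_orbit E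
  fun_prop

lemma orbit_add_period (E x : ℝ) : w.orbit E (x + w.period E) = w.orbit E x := by
  simp only [orbit, angle_add_period, sin_add_two_pi]

lemma exists_orbit_ne {E : ℝ} (hE : 0 < E) : ∃ x y, w.orbit E x ≠ w.orbit E y := by
  obtain ⟨x, hx⟩ := w.angle_surjective E (π / 2)
  obtain ⟨y, hy⟩ := w.angle_surjective E (-(π / 2))
  refine ⟨x, y, fun h => ?_⟩
  simp only [orbit, hx, hy, sin_neg, sin_pi_div_two, mul_one, mul_neg,
    w.toOrderIso.symm.injective.eq_iff] at h
  linarith [sqrt_pos.2 hE]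

lemma period_zero : w.period 0 = √2 * π / w.derivative (w.toOrderIso.symm 0) := by
  have h2 : √2 * √2 = 2 := mul_self_sqrt zero_le_two
  have := (w.derivative_pos (w.toOrderIso.symm 0)).ne'
  simp only [period, timeOfAngle, angularSpeed, sqrt_zero, zero_mul,
    intervalIntegral.integral_const, sub_zero, smul_eq_mul]
  field_simp
  linear_combination -h2

lemma angularSpeed_mul_sqrt_le {K E τ : ℝ}
    (hK : ∀ y, w y < 0 → -(w y * w.derivative y) ≤ K) (hE : 0 < E)
    (hτ : τ ∈ Icc (5 * π / 4) (7 * π / 4)) : w.angularSpeed E τ * √E ≤ 2 * K := by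
  have h2 : √2 * √2 = 2 := mul_self_sqrt zero_le_two
  have hy : w (w.toOrderIso.symm (√E * sin τ)) = √E * sin τ := w.toOrderIso.apply_symm_apply _
  set y := w.toOrderIso.symm (√E * sin τ)
  have hsin := sin_le_neg_sqrt_two_div_two hτ.1 hτ.2
  have hsE := sqrt_pos.2 hE
  have hsin' : √2 * sin τ ≤ -1 := by nlinarith [sqrt_nonneg 2]
  have hle : √E ≤ -(√2 * w y) := by rw [hy]; nlinarith
  have hwy : w y < 0 := by nlinarith [sqrt_pos.2 two_pos]
  calc w.angularSpeed E τ * √E ≤ w.angularSpeed E τ * -(√2 * w y) :=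
        mul_le_mul_of_nonneg_left hle (w.angularSpeed_pos E τ).le
    _ = 2 * -(w y * w.derivative y) := by
        simp only [angularSpeed, y]
        linear_combination (-(w y * w.derivative y)) * h2
    _ ≤ 2 * K := by linarith [hK y hwy]

lemma pi_mul_sqrt_le_four_mul_period {K E : ℝ}
    (hK : ∀ y, w y < 0 → -(w y * w.derivative y) ≤ K) (hE : 0 < E) :
    π * √E ≤ 4 * K * w.period E := by
  have hsE := sqrt_pos.2 hE
  have hK₀ : 0 < K := by
    have := w.angularSpeed_mul_sqrt_le hK hE (τ := 3 * π / 2)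
      ⟨by linarith [pi_pos], by linarith [pi_pos]⟩
    nlinarith [w.angularSpeed_pos E (3 * π / 2)]
  have hpoint : ∀ τ ∈ Icc (5 * π / 4) (7 * π / 4),
      √E / (2 * K) ≤ (w.angularSpeed E τ)⁻¹ := by
    intro τ hτ
    rw [div_le_iff₀ (by positivity), inv_mul_eq_div, le_div_iff₀ (w.angularSpeed_pos E τ),
      mul_comm]
    exact w.angularSpeed_mul_sqrt_le hK hE hτ
  have hint := (w.continuous_inv_angularSpeed E).intervalIntegrable (μ := volume)
  have hsub : (7 * π / 4 - 5 * π / 4) * (√E / (2 * K)) ≤ w.period E := by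
    calc (7 * π / 4 - 5 * π / 4) * (√E / (2 * K))
        ≤ ∫ τ in (5 * π / 4)..(7 * π / 4), (w.angularSpeed E τ)⁻¹ := by
          have h := integral_mono_on (by linarith [pi_pos]) intervalIntegrable_const
            (hint _ _) hpoint
          rwa [intervalIntegral.integral_const, smul_eq_mul] at h
      _ ≤ w.period E :=
          integral_mono_interval (by positivity) (by linarith [pi_pos]) (by linarith [pi_pos])
            (ae_of_all _ fun τ => (inv_pos.2 (w.angularSpeed_pos E τ)).le) (hint _ _)
  calc π * √E = 4 * K * ((7 * π / 4 - 5 * π / 4) * (√E / (2 * K))) := by field_simp; ring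
    _ ≤ 4 * K * w.period E := by gcongr

end PotentialRoot

def expQuot (y : ℝ) : ℝ := 2 * ∫ t in (0 : ℝ)..1, (1 - t) * exp (t * y)

lemma sq_mul_expQuot (y : ℝ) : y ^ 2 * expQuot y = 2 * (exp y - y - 1) := by
  rcases eq_or_ne y 0 with rfl | hy
  · simp
  have hderiv (t : ℝ) : HasDerivAt (fun t => (1 - t) * exp (t * y) / y + exp (t * y) / y ^ 2)
      ((1 - t) * exp (t * y)) t := by
    have he := ((hasDerivAt_id t).mul_const y).exp
    refine ((((hasDerivAt_const t 1).sub (hasDerivAt_id t)).mul he).div_const y |>.add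
      (he.div_const _)).congr_deriv ?_
    simp only [id, Pi.sub_apply]
    field_simp
    ring
  rw [expQuot, integral_eq_sub_of_hasDerivAt (fun t _ => hderiv t)
    (by apply Continuous.intervalIntegrable; fun_prop)]
  field_simp
  simp only [sub_self, mul_zero, zero_add, mul_one, exp_zero, sub_zero, one_mul]
  ring

lemma expQuot_pos (y : ℝ) : 0 < expQuot y := by
  have : 0 < ∫ t in (0 : ℝ)..1, (1 - t) * exp (t * y) :=
    intervalIntegral_pos_of_pos_on (by apply Continuous.intervalIntegrable; fun_prop)
      (fun t ht => mul_pos (by linarith [ht.2]) (exp_pos _)) zero_lt_one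
  rw [expQuot]
  positivity

lemma expQuot_zero : expQuot 0 = 1 := by
  norm_num [expQuot, integral_sub intervalIntegrable_const intervalIntegrable_id]

lemma hasDerivAt_expQuot (y : ℝ) :
    HasDerivAt expQuot (2 * ∫ t in (0 : ℝ)..1, (1 - t) * t * exp (t * y)) y := by
  refine (hasDerivAt_integral_of_dominated_loc_of_deriv_le
    (F := fun x t => (1 - t) * exp (t * x)) (F' := fun x t => (1 - t) * t * exp (t * x))
    (bound := fun _ => exp (|y| + 1))
    (Metric.ball_mem_nhds y one_pos) (Eventually.of_forall fun x => ?_) ?_ ?_ ?_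
    intervalIntegrable_const (ae_of_all _ fun t _ x _ => ?_)).2.const_mul 2
  · exact Continuous.aestronglyMeasurable (by fun_prop)
  · apply Continuous.intervalIntegrable; fun_prop
  · exact Continuous.aestronglyMeasurable (by fun_prop)
  · refine ae_of_all _ fun t ht x hx => ?_
    rw [uIoc_of_le zero_le_one] at ht
    have hx' : |x| ≤ |y| + 1 := by
      have := (abs_sub_abs_le_abs_sub x y).trans (Metric.mem_ball.1 hx).le
      linarith
    rw [Real.norm_eq_abs, abs_of_nonneg (mul_nonneg (mul_nonneg (by linarith [ht.2]) ht.1.le)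
      (exp_pos _).le)]
    have htx : t * x ≤ |y| + 1 := by nlinarith [ht.1, ht.2, le_abs_self x, abs_nonneg x]
    calc (1 - t) * t * exp (t * x) ≤ 1 * exp (|y| + 1) :=
          mul_le_mul (by nlinarith [ht.1, ht.2]) (exp_le_exp.2 htx) (exp_pos _).le zero_le_one
      _ = exp (|y| + 1) := one_mul _
  · refine (((hasDerivAt_id x).const_mul t).exp.const_mul (1 - t)).congr_deriv ?_
    simp only [id]
    ring

lemma contDiff_one_expQuot : ContDiff ℝ 1 expQuot := by
  rw [contDiff_one_iff_deriv, funext fun y => (hasDerivAt_expQuot y).deriv]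
  exact ⟨fun y => (hasDerivAt_expQuot y).differentiableAt,
    continuous_const.mul (continuous_parametric_intervalIntegral_of_continuous'
      (by fun_prop) 0 1)⟩

def expRoot (y : ℝ) : ℝ := 2 * √π * y * √(expQuot y)

lemma contDiff_one_expRoot : ContDiff ℝ 1 expRoot :=
  (contDiff_const.mul contDiff_id).mul (contDiff_one_expQuot.sqrt fun y => (expQuot_pos y).ne')

lemma expRoot_zero : expRoot 0 = 0 := by simp [expRoot]

lemma expRoot_sq (y : ℝ) : expRoot y ^ 2 = 8 * π * (exp y - y - 1) := by
  rw [expRoot, mul_pow, mul_pow, mul_pow, sq_sqrt pi_pos.le, sq_sqrt (expQuot_pos y).le]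
  linear_combination 4 * π * sq_mul_expQuot y

lemma two_mul_expRoot_mul_deriv (y : ℝ) :
    2 * expRoot y * deriv expRoot y = 8 * π * (exp y - 1) := by
  have hd := (contDiff_one_expRoot.differentiable one_ne_zero y).hasDerivAt
  have h₁ := hd.mul hd
  rw [show expRoot * expRoot = fun y => 8 * π * (exp y - y - 1) from
    funext fun y => by rw [Pi.mul_apply, ← sq, expRoot_sq]] at h₁
  have h₂ : HasDerivAt (fun y => 8 * π * (exp y - y - 1)) (8 * π * (exp y - 1)) y := by
    simpa using (((hasDerivAt_exp y).sub (hasDerivAt_id y)).sub_const 1).const_mul (8 * π)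
  linear_combination h₁.unique h₂

lemma deriv_expRoot_zero : deriv expRoot 0 = 2 * √π := by
  have hq := ((contDiff_one_expQuot.sqrt fun y => (expQuot_pos y).ne').differentiable one_ne_zero
    0).hasDerivAt
  have h : HasDerivAt expRoot _ 0 := ((hasDerivAt_id (0 : ℝ)).const_mul (2 * √π)).mul hq
  simp [h.deriv, expQuot_zero]

lemma deriv_expRoot_pos (y : ℝ) : 0 < deriv expRoot y := by
  have hq := sqrt_pos.2 (expQuot_pos y)
  have hπ := sqrt_pos.2 pi_pos
  have h := two_mul_expRoot_mul_deriv y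
  rcases lt_trichotomy y 0 with hy | rfl | hy
  · have hW : expRoot y < 0 := mul_neg_of_neg_of_pos (mul_neg_of_pos_of_neg (by positivity) hy) hq
    have hneg : 2 * expRoot y * deriv expRoot y < 0 := by
      rw [h]
      exact mul_neg_of_pos_of_neg (by positivity) (by linarith [exp_lt_one_iff.2 hy])
    exact pos_of_mul_neg_right hneg (by linarith)
  · rw [deriv_expRoot_zero]
    positivity
  · have hW : 0 < expRoot y := mul_pos (mul_pos (by positivity) hy) hq
    have hpos : 0 < 2 * expRoot y * deriv expRoot y := by
      rw [h]
      exact mul_pos (by positivity) (by linarith [one_lt_exp_iff.2 hy])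
    exact pos_of_mul_pos_right hpos (by linarith)

lemma expRoot_strictMono : StrictMono expRoot := strictMono_of_deriv_pos deriv_expRoot_pos

lemma abs_sub_one_le_expRoot_sq (y : ℝ) : |y| - 1 ≤ expRoot y ^ 2 := by
  rw [expRoot_sq]
  rcases le_or_gt 0 y with hy | hy
  · have := mul_le_mul_of_nonneg_left (quadratic_le_exp_of_nonneg hy) pi_pos.le
    nlinarith [abs_of_nonneg hy, mul_le_mul_of_nonneg_right pi_gt_three.le (sq_nonneg y)]
  · nlinarith [add_one_le_exp y, exp_pos y, abs_of_neg hy, pi_gt_three]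

lemma expRoot_surjective : Function.Surjective expRoot := by
  intro z
  refine mem_range_of_exists_le_of_exists_ge contDiff_one_expRoot.continuous
    ⟨-(z ^ 2 + 1), ?_⟩ ⟨z ^ 2 + 1, ?_⟩
  · have h₁ := abs_sub_one_le_expRoot_sq (-(z ^ 2 + 1))
    have h₂ : expRoot (-(z ^ 2 + 1)) ≤ 0 :=
      expRoot_zero ▸ expRoot_strictMono.monotone (by nlinarith)
    rw [abs_neg, abs_of_pos (by positivity)] at h₁
    nlinarith
  · have h₁ := abs_sub_one_le_expRoot_sq (z ^ 2 + 1)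
    have h₂ : 0 ≤ expRoot (z ^ 2 + 1) :=
      expRoot_zero ▸ expRoot_strictMono.monotone (by positivity)
    rw [abs_of_pos (by positivity)] at h₁
    nlinarith

def expPotentialRoot : PotentialRoot where
  toOrderIso := StrictMono.orderIsoOfSurjective expRoot expRoot_strictMono expRoot_surjective
  derivative := deriv expRoot
  hasDerivAt y := (contDiff_one_expRoot.differentiable one_ne_zero y).hasDerivAt
  continuous_derivative := contDiff_one_expRoot.continuous_deriv le_rfl
  derivative_pos := deriv_expRoot_pos

lemma expPotentialRoot_apply (y : ℝ) : expPotentialRoot.toOrderIso y = expRoot y := rfl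

lemma expPotentialRoot_derivative : expPotentialRoot.derivative = deriv expRoot := rfl

lemma expPotentialRoot_period_zero : expPotentialRoot.period 0 = √(π / 2) := by
  have h0 : expPotentialRoot.toOrderIso.symm 0 = 0 :=
    expPotentialRoot.toOrderIso.symm_apply_eq.2 expRoot_zero.symm
  rw [PotentialRoot.period_zero, h0, expPotentialRoot_derivative, deriv_expRoot_zero,
    sqrt_div pi_pos.le]
  have hπ := sqrt_pos.2 pi_pos
  have h2 := sqrt_pos.2 (zero_lt_two' ℝ)
  field_simp
  rw [sq_sqrt pi_pos.le, sq_sqrt zero_le_two]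

lemma sqrt_le_sixteen_mul_expPotentialRoot_period {E : ℝ} (hE : 0 < E) :
    √E ≤ 16 * expPotentialRoot.period E := by
  have hK (y : ℝ) (_ : expRoot y < 0) : -(expRoot y * deriv expRoot y) ≤ 4 * π := by
    nlinarith [two_mul_expRoot_mul_deriv y, exp_pos y, pi_pos]
  have := expPotentialRoot.pi_mul_sqrt_le_four_mul_period hK hE
  nlinarith [pi_pos]

lemma deriv_deriv_expPotentialRoot_orbit (E x : ℝ) :
    deriv (deriv (expPotentialRoot.orbit E)) x =
      8 * π * (1 - exp (expPotentialRoot.orbit E x)) := by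
  rw [PotentialRoot.deriv_deriv_orbit, expPotentialRoot_apply, expPotentialRoot_derivative]
  linear_combination -two_mul_expRoot_mul_deriv (expPotentialRoot.orbit E x)

end

/-- For every `a > √(π/2)` there is a nonconstant `C²` function `f : ℝ → ℝ`
solving `f'' = 8π(1 − e^f)` on `ℝ` with period `a`. -/
theorem exists_nonconstant_periodic_solution
    (a : ℝ) (ha : Real.sqrt (π / 2) < a) :
    ∃ f : ℝ → ℝ, ContDiff ℝ 2 f ∧ (∃ x y, f x ≠ f y) ∧
      (∀ x, deriv (deriv f) x = 8 * π * (1 - Real.exp (f x))) ∧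
      (∀ x, f (x + a) = f x) := by
  let w := expPotentialRoot
  have ha₀ : 0 < a := (sqrt_nonneg _).trans_lt ha
  have hlarge : a ≤ w.period ((16 * a) ^ 2) := by
    have := sqrt_le_sixteen_mul_expPotentialRoot_period (E := (16 * a) ^ 2) (by positivity)
    rw [sqrt_sq (by positivity)] at this
    linarith
  obtain ⟨E, hE, hTE⟩ := intermediate_value_Icc (sq_nonneg (16 * a))
    w.continuous_period.continuousOn ⟨expPotentialRoot_period_zero.le.trans ha.le, hlarge⟩
  have hE₀ : 0 < E := hE.1.lt_of_ne <| by
    rintro rfl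
    exact ha.ne (expPotentialRoot_period_zero ▸ hTE)
  refine ⟨w.orbit E, w.contDiff_two_orbit E, w.exists_orbit_ne hE₀,
    deriv_deriv_expPotentialRoot_orbit E, fun x => ?_⟩
  rw [← hTE]
  exact w.orbit_add_period E x
end

section
/- Let a > 0 and let f : ℝ → ℝ be twice differentiable with f''(x) = 8π(1 − exp(f(x))) for all x ∈ ℝ and f(x + a) = f(x) for all x ∈ ℝ. Let E = (f'(0))²/2 + 8π(exp(f(0)) − f(0) − 1) be the energy of f. Then (1/(4πa)) ∫₀^a f(x) dx = −E/(32π²) + (1/(64π²a)) ∫₀^a (f'(x))² dx. -/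
open Real intervalIntegral
open MeasureTheory (volume)

/-!
The energy `H = (f')²/2 + V(f)`, with potential `V(y) = 8π(e^y − y − 1)`, is conserved, so
integrating `H = E` over a period gives `½∫(f')² + 8π(∫e^f − ∫f − a) = aE`. Integrating
`f'' = 8π(1 − e^f)` over a period and using periodicity of `f'` gives `∫e^f = a`, and the
identity follows by solving for `∫f`.
-/

theorem Function.Periodic.deriv {𝕜 F : Type*} [NontriviallyNormedField 𝕜] [NormedAddCommGroup F]
    [NormedSpace 𝕜 F] {f : 𝕜 → F} {c : 𝕜} (hf : Function.Periodic f c) :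
    Function.Periodic (deriv f) c := fun x => by
  rw [← deriv_comp_add_const, funext hf]

theorem integral_deriv_eq_zero_of_periodic {g g' : ℝ → ℝ} {a : ℝ}
    (hg : ∀ x, HasDerivAt g (g' x) x) (hint : IntervalIntegrable g' volume 0 a)
    (hper : Function.Periodic g a) :
    ∫ x in (0:ℝ)..a, g' x = 0 := by
  rw [integral_eq_sub_of_hasDerivAt (fun x _ => hg x) hint, ← zero_add a, hper, sub_self]

/-- Conservation of energy for Newton's equation `f'' = -V'(f)`. -/
theorem sq_div_two_add_potential_eq {V V' f f' : ℝ → ℝ} (hV : ∀ y, HasDerivAt V (V' y) y)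
    (hf : ∀ x, HasDerivAt f (f' x) x) (hf' : ∀ x, HasDerivAt f' (-V' (f x)) x) (x y : ℝ) :
    f' x ^ 2 / 2 + V (f x) = f' y ^ 2 / 2 + V (f y) := by
  have hH (t : ℝ) : HasDerivAt (fun t => f' t ^ 2 / 2 + V (f t)) 0 t := by
    have h : HasDerivAt (fun t => f' t ^ 2 / 2 + V (f t))
        (2 * f' t ^ 1 * -V' (f t) / 2 + V' (f t) * f' t) t :=
      (((hf' t).pow 2).div_const 2).add ((hV (f t)).comp t (hf t))
    exact h.congr_deriv (by ring)
  exact is_const_of_deriv_eq_zero (fun t => (hH t).differentiableAt) (fun t => (hH t).deriv) x y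

noncomputable def vortexPotential (y : ℝ) : ℝ := 8 * π * (exp y - y - 1)

theorem hasDerivAt_vortexPotential (y : ℝ) :
    HasDerivAt vortexPotential (8 * π * (exp y - 1)) y := by
  show HasDerivAt (fun y => 8 * π * (exp y - y - 1)) _ y
  simpa using (((hasDerivAt_exp y).sub (hasDerivAt_id y)).sub_const 1).const_mul (8 * π)

section PeriodicSolution

variable {a : ℝ} {f f' : ℝ → ℝ}

theorem integral_exp_eq_period (hf : Continuous f)
    (hf' : ∀ x, HasDerivAt f' (8 * π * (1 - exp (f x))) x) (hper' : Function.Periodic f' a) :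
    ∫ x in (0:ℝ)..a, exp (f x) = a := by
  have hexp : Continuous fun x => exp (f x) := continuous_exp.comp hf
  have hzero := integral_deriv_eq_zero_of_periodic hf'
    ((continuous_const.mul (continuous_const.sub hexp)).intervalIntegrable 0 a) hper'
  rw [integral_const_mul, integral_sub intervalIntegrable_const (hexp.intervalIntegrable 0 a),
    integral_const, smul_eq_mul, mul_one, sub_zero] at hzero
  have hπ : 8 * π ≠ 0 := by positivity
  linarith [(mul_eq_zero.1 hzero).resolve_left hπ]

theorem integral_energy_eq (hf : Continuous f) (hf' : Continuous f') {E : ℝ}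
    (henergy : ∀ x, f' x ^ 2 / 2 + vortexPotential (f x) = E)
    (hexp : ∫ x in (0:ℝ)..a, exp (f x) = a) :
    (∫ x in (0:ℝ)..a, f' x ^ 2) / 2 - 8 * π * ∫ x in (0:ℝ)..a, f x = a * E := by
  have hexpi : IntervalIntegrable (fun x => exp (f x)) volume 0 a :=
    (continuous_exp.comp hf).intervalIntegrable 0 a
  have hfi : IntervalIntegrable f volume 0 a := hf.intervalIntegrable 0 a
  have hsq : IntervalIntegrable (fun x => f' x ^ 2) volume 0 a := (hf'.pow 2).intervalIntegrable 0 a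
  have hint : ∫ x in (0:ℝ)..a, (f' x ^ 2 / 2 + 8 * π * (exp (f x) - f x - 1)) = a * E := by
    simp only [← vortexPotential.eq_def, henergy, integral_const, sub_zero, smul_eq_mul]
  rw [integral_add (hsq.div_const 2) (((hexpi.sub hfi).sub intervalIntegrable_const).const_mul _),
    integral_div, integral_const_mul, integral_sub (hexpi.sub hfi) intervalIntegrable_const,
    integral_sub hexpi hfi, hexp, integral_const, smul_eq_mul] at hint
  linarith

end PeriodicSolution

/-- For a periodic solution (period `a > 0`) of `f'' = 8π(1 − e^f)` with
energy `E = (f'(0))²/2 + 8π(e^{f(0)} − f(0) − 1)`, the identity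
`(1/(4πa)) ∫₀^a f = −E/(32π²) + (1/(64π²a)) ∫₀^a (f')²` holds. -/
theorem average_f_eq_energy_action_identity
    (a : ℝ) (ha : 0 < a)
    (f f' : ℝ → ℝ)
    (hf : ∀ x, HasDerivAt f (f' x) x)
    (hf' : ∀ x, HasDerivAt f' (8 * π * (1 - Real.exp (f x))) x)
    (hper : ∀ x, f (x + a) = f x)
    (E : ℝ)
    (hE : E = (f' 0) ^ 2 / 2 + 8 * π * (Real.exp (f 0) - f 0 - 1)) :
    (1 / (4 * π * a)) * ∫ x in (0:ℝ)..a, f x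
      = -E / (32 * π ^ 2) + (1 / (64 * π ^ 2 * a)) * ∫ x in (0:ℝ)..a, (f' x) ^ 2 := by
  have hcf : Continuous f := continuous_iff_continuousAt.2 fun x => (hf x).continuousAt
  have hcf' : Continuous f' := continuous_iff_continuousAt.2 fun x => (hf' x).continuousAt
  have hderiv : deriv f = f' := funext fun x => (hf x).deriv
  have hper' : Function.Periodic f' a := hderiv ▸ Function.Periodic.deriv hper
  have henergy (x : ℝ) : f' x ^ 2 / 2 + vortexPotential (f x) = E := by
    rw [hE, sq_div_two_add_potential_eq hasDerivAt_vortexPotential hf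
      (fun t => (hf' t).congr_deriv (by ring)) x 0, vortexPotential]
  have hkey := integral_energy_eq hcf hcf' henergy (integral_exp_eq_period hcf hf' hper')
  field_simp
  linear_combination (-256) * hkey
end

section
/- Let a > 0 and let f : ℝ → ℝ be continuously differentiable with (f'(x))² < 16π²a² for all x ∈ ℝ. Define F : ℝ → ℝ by F(x) = exp(f(x)/2)/(2πa), and let X : ℝ → ℝ be differentiable with X'(x) = exp(f(x)/2)·√(1 − (f'(x))²/(16π²a²)) for all x. Define Φ : ℝ² → ℝ³ by Φ(x, y) = (X(x), F(x)·sin(2πa y), F(x)·cos(2πa y)). Then for every (x, y) ∈ ℝ² the total derivative DΦ(x, y) : ℝ² → ℝ³ satisfies ‖DΦ(x, y)(v)‖ = exp(f(x)/2)·‖v‖ for all v ∈ ℝ²; that is, Φ pulls back the Euclidean metric of ℝ³ to the conformal metric e^{f(x)}(dx² + dy²), and X is strictly increasing. -/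
open Real

/-!
`Φ` is the surface of revolution of the profile curve `x ↦ (X x, F x)`, the angle being `k y`
with `k = 2πa`. Its differential sends `∂ₓ` and `∂_y` to orthogonal vectors of lengths
`√(X'² + F'²)` and `k F`, so `Φ` is conformal with factor `e^{f/2}` as soon as both lengths equal
`e^{f/2}`: the second by the choice of `F`, the first because `X'` is chosen so that
`X'² + F'² = e^f`.
-/

noncomputable def revolutionMap (X R : ℝ → ℝ) (k : ℝ) (p : EuclideanSpace ℝ (Fin 2)) :
    EuclideanSpace ℝ (Fin 3) :=
  !₂[X (p 0), R (p 0) * sin (k * p 1), R (p 0) * cos (k * p 1)]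

theorem fderiv_euclidean_apply {𝕜 ι H : Type*} [RCLike 𝕜] [Fintype ι] [NormedAddCommGroup H]
    [NormedSpace 𝕜 H] {f : H → EuclideanSpace 𝕜 ι} {y : H} (hf : DifferentiableAt 𝕜 f y)
    (v : H) (i : ι) :
    fderiv 𝕜 f y v i = fderiv 𝕜 (fun x => f x i) y v := by
  have := ((PiLp.hasFDerivAt_apply 2 (f y) i).comp y hf.hasFDerivAt).fderiv
  exact (DFunLike.congr_fun this v).symm

section RevolutionMap

variable {X R : ℝ → ℝ} {X' R' : ℝ} (k : ℝ) {p : EuclideanSpace ℝ (Fin 2)}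

theorem differentiableAt_revolutionMap (hX : DifferentiableAt ℝ X (p 0))
    (hR : DifferentiableAt ℝ R (p 0)) : DifferentiableAt ℝ (revolutionMap X R k) p := by
  rw [differentiableAt_euclidean]
  intro i
  fin_cases i <;>
    simp only [revolutionMap, Fin.isValue, Fin.zero_eta, Fin.mk_one, Fin.reduceFinMk,
      Matrix.cons_val] <;>
    fun_prop

theorem fderiv_revolutionMap_apply (hX : HasDerivAt X X' (p 0)) (hR : HasDerivAt R R' (p 0))
    (v : EuclideanSpace ℝ (Fin 2)) :
    fderiv ℝ (revolutionMap X R k) p v =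
      !₂[X' * v 0, R' * v 0 * sin (k * p 1) + R (p 0) * (k * v 1) * cos (k * p 1),
        R' * v 0 * cos (k * p 1) - R (p 0) * (k * v 1) * sin (k * p 1)] := by
  have h0 := PiLp.hasFDerivAt_apply (𝕜 := ℝ) 2 p 0
  have h1 := (PiLp.hasFDerivAt_apply (𝕜 := ℝ) 2 p 1).const_mul k
  have hXc : HasFDerivAt (fun q : EuclideanSpace ℝ (Fin 2) => X (q 0)) _ p :=
    hX.comp_hasFDerivAt p h0
  have hRc := hR.comp_hasFDerivAt p h0
  have hsin : HasFDerivAt (fun q : EuclideanSpace ℝ (Fin 2) => R (q 0) * sin (k * q 1)) _ p :=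
    hRc.mul ((hasDerivAt_sin _).comp_hasFDerivAt p h1)
  have hcos : HasFDerivAt (fun q : EuclideanSpace ℝ (Fin 2) => R (q 0) * cos (k * q 1)) _ p :=
    hRc.mul ((hasDerivAt_cos _).comp_hasFDerivAt p h1)
  ext i
  rw [fderiv_euclidean_apply (differentiableAt_revolutionMap k hX.differentiableAt
    hR.differentiableAt)]
  fin_cases i <;>
    simp only [revolutionMap, Fin.isValue, Fin.mk_one, Fin.reduceFinMk, Matrix.cons_val,
      hXc.fderiv, hsin.fderiv, hcos.fderiv, Function.comp_apply, add_apply,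
      smul_apply, PiLp.proj_apply, smul_eq_mul] <;>
    ring

theorem norm_fderiv_revolutionMap_apply_sq (hX : HasDerivAt X X' (p 0))
    (hR : HasDerivAt R R' (p 0)) (v : EuclideanSpace ℝ (Fin 2)) :
    ‖fderiv ℝ (revolutionMap X R k) p v‖ ^ 2 =
      (X' ^ 2 + R' ^ 2) * v 0 ^ 2 + (k * R (p 0)) ^ 2 * v 1 ^ 2 := by
  rw [fderiv_revolutionMap_apply k hX hR, EuclideanSpace.norm_sq_eq, Fin.sum_univ_three]
  simp only [Matrix.cons_val, Real.norm_eq_abs, sq_abs]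
  linear_combination ((R' * v 0) ^ 2 + (R (p 0) * (k * v 1)) ^ 2) * sin_sq_add_cos_sq (k * p 1)

theorem norm_fderiv_revolutionMap_apply {c : ℝ} (hX : HasDerivAt X X' (p 0))
    (hR : HasDerivAt R R' (p 0)) (hc : 0 ≤ c) (hmeridian : X' ^ 2 + R' ^ 2 = c ^ 2)
    (hparallel : (k * R (p 0)) ^ 2 = c ^ 2) (v : EuclideanSpace ℝ (Fin 2)) :
    ‖fderiv ℝ (revolutionMap X R k) p v‖ = c * ‖v‖ := by
  refine (pow_left_inj₀ (norm_nonneg _) (by positivity) two_ne_zero).1 ?_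
  rw [norm_fderiv_revolutionMap_apply_sq k hX hR, hmeridian, hparallel, mul_pow,
    EuclideanSpace.norm_sq_eq, Fin.sum_univ_two]
  simp only [Real.norm_eq_abs, sq_abs]
  ring

end RevolutionMap

theorem mul_sqrt_one_sub_sq_add_sq {E D k : ℝ} (hk : k ≠ 0) (hD : D ^ 2 ≤ (2 * k) ^ 2) :
    (E * √(1 - D ^ 2 / (2 * k) ^ 2)) ^ 2 + (E * (D / 2) / k) ^ 2 = E ^ 2 := by
  have hpos : (0 : ℝ) < (2 * k) ^ 2 := by positivity
  rw [mul_pow, sq_sqrt (sub_nonneg.2 ((div_le_one hpos).2 hD))]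
  field_simp
  ring

/-- The map `Φ(x,y) = (X(x), F(x) sin(2πay), F(x) cos(2πay))`, with
`F(x) = e^{f(x)/2}/(2πa)` and `X' = e^{f/2}·√(1 − (f')²/(16π²a²))`, is an
isometric immersion pulling back the Euclidean metric of `ℝ³` to the
conformal metric `e^{f(x)}(dx² + dy²)`; moreover `X` is strictly increasing. -/
theorem cylinder_isometric_embedding
    (a : ℝ) (ha : 0 < a)
    (f : ℝ → ℝ) (hf : ContDiff ℝ 1 f)
    (hbound : ∀ x, (deriv f x) ^ 2 < 16 * π ^ 2 * a ^ 2)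
    (F X : ℝ → ℝ)
    (hF : ∀ x, F x = Real.exp (f x / 2) / (2 * π * a))
    (hX : ∀ x, HasDerivAt X
      (Real.exp (f x / 2) * Real.sqrt (1 - (deriv f x) ^ 2 / (16 * π ^ 2 * a ^ 2))) x)
    (Φ : EuclideanSpace ℝ (Fin 2) → EuclideanSpace ℝ (Fin 3))
    (hΦ : ∀ p, Φ p = (WithLp.equiv 2 (Fin 3 → ℝ)).symm
      ![X (p 0), F (p 0) * Real.sin (2 * π * a * p 1),
        F (p 0) * Real.cos (2 * π * a * p 1)]) :
    (∀ p : EuclideanSpace ℝ (Fin 2), DifferentiableAt ℝ Φ p ∧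
      ∀ v : EuclideanSpace ℝ (Fin 2),
        ‖fderiv ℝ Φ p v‖ = Real.exp (f (p 0) / 2) * ‖v‖) ∧
      StrictMono X := by
  set k := 2 * π * a
  have hk : k ≠ 0 := by positivity
  have h16 : 16 * π ^ 2 * a ^ 2 = (2 * k) ^ 2 := by ring
  simp only [h16] at hbound hX
  have hF' (x : ℝ) : HasDerivAt F (exp (f x / 2) * (deriv f x / 2) / k) x := by
    rw [funext hF]
    exact ((hf.differentiable one_ne_zero x).hasDerivAt.div_const 2).exp.div_const k
  have hmeridian (x : ℝ) := mul_sqrt_one_sub_sq_add_sq (E := exp (f x / 2)) hk (hbound x).le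
  have hparallel (x : ℝ) : (k * F x) ^ 2 = exp (f x / 2) ^ 2 := by rw [hF, mul_div_cancel₀ _ hk]
  obtain rfl : Φ = revolutionMap X F k := funext hΦ
  refine ⟨fun p => ⟨?_, norm_fderiv_revolutionMap_apply k (hX _) (hF' _) (exp_pos _).le
    (hmeridian _) (hparallel _)⟩, strictMono_of_deriv_pos fun x => ?_⟩
  · exact differentiableAt_revolutionMap k (hX _).differentiableAt (hF' _).differentiableAt
  · rw [(hX x).deriv]
    exact mul_pos (exp_pos _) (sqrt_pos.2 (sub_pos.2 ((div_lt_one (by positivity)).2 (hbound x))))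
end

section
/- Let n ≥ 2 be even, V > 0, C > 0, λ > 0, and a₀, …, a_{n/2−1} real numbers. Let K : (0, ∞) → ℝ be continuous with |K(t) − (4πt)^{−n/2} Σ_{k=0}^{n/2−1} a_k t^k| ≤ C for all t ∈ (0, 1] and |K(t) − 1/V| ≤ C e^{−λt} for all t ≥ 1. Set D(t) = K(t) − 1/V − (4π)^{−n/2} Σ_{k=0}^{n/2−1} a_k t^{k−n/2}. Then for every real s > n/2 the integral ∫₀^∞ (K(t) − 1/V) t^{s−1} dt converges absolutely and equals Σ_{k=0}^{n/2−1} a_k / ((4π)^{n/2}(s − n/2 + k)) + ∫₁^∞ (K(t) − 1/V) t^{s−1} dt + ∫₀^1 D(t) t^{s−1} dt, where the last integral converges absolutely for every real s > 0. -/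
/-!
Subtracting the polar part `P(t) = (4π)^{-n/2} ∑ aₖ t^{k-n/2}` from `K - 1/V` leaves a function
bounded on `(0,1]`, so `(K - 1/V - P)(t) t^{s-1}` is integrable there for every `s > 0`, while the
exponential decay makes `(K - 1/V)(t) t^{s-1}` integrable on `(1,∞)` for every `s`. For `s > n/2`
each monomial of `P(t) t^{s-1}` is integrable on `(0,1]`, with integral `aₖ / ((4π)^{n/2}(s-n/2+k))`,
and splitting `(0,∞) = (0,1] ∪ (1,∞)` gives the identity.
-/

open Real MeasureTheory Set

lemma integrableOn_Ioc_zero_one_rpow {r : ℝ} (hr : -1 < r) :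
    IntegrableOn (fun t : ℝ => t ^ r) (Ioc 0 1) :=
  (intervalIntegrable_iff_integrableOn_Ioc_of_le zero_le_one).1
    (intervalIntegral.intervalIntegrable_rpow' hr)

lemma integral_Ioc_zero_one_rpow {r : ℝ} (hr : -1 < r) :
    ∫ t in Ioc (0 : ℝ) 1, t ^ r = (r + 1)⁻¹ := by
  rw [← intervalIntegral.integral_of_le zero_le_one, integral_rpow (Or.inl hr), one_rpow,
    zero_rpow (by linarith)]
  ring

lemma integrableOn_Ioc_zero_one_mul_rpow_of_abs_le {f : ℝ → ℝ} {M r : ℝ}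
    (hf : ContinuousOn f (Ioc 0 1)) (hbd : ∀ t ∈ Ioc (0 : ℝ) 1, |f t| ≤ M) (hr : -1 < r) :
    IntegrableOn (fun t => f t * t ^ r) (Ioc 0 1) := by
  have hpow : ContinuousOn (fun t : ℝ => t ^ r) (Ioc 0 1) :=
    continuousOn_id.rpow_const fun _ ht => Or.inl (ne_of_gt ht.1)
  refine ((integrableOn_Ioc_zero_one_rpow hr).const_mul M).mono
    ((hf.mul hpow).aestronglyMeasurable measurableSet_Ioc) ?_
  filter_upwards [ae_restrict_mem measurableSet_Ioc] with t ht
  have hpos : 0 ≤ t ^ r := rpow_nonneg ht.1.le r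
  rw [norm_mul, norm_mul, norm_of_nonneg hpos, Real.norm_eq_abs, Real.norm_eq_abs]
  exact mul_le_mul_of_nonneg_right ((hbd t ht).trans (le_abs_self M)) hpos

lemma integrableOn_Ioi_mul_rpow_of_abs_le_exp {f : ℝ → ℝ} {x₀ C lam r : ℝ} (hx₀ : 0 ≤ x₀)
    (hf : ContinuousOn f (Ioi x₀)) (hbd : ∀ t ∈ Ioi x₀, |f t| ≤ C * exp (-lam * t))
    (hlam : 0 < lam) (hr : -1 < r) :
    IntegrableOn (fun t => f t * t ^ r) (Ioi x₀) := by
  have hpow : ContinuousOn (fun t : ℝ => t ^ r) (Ioi x₀) :=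
    continuousOn_id.rpow_const fun _ ht => Or.inl (ne_of_gt (hx₀.trans_lt ht))
  have hdom : IntegrableOn (fun t : ℝ => C * (t ^ r * exp (-lam * t))) (Ioi x₀) := by
    have h := integrableOn_rpow_mul_exp_neg_mul_rpow hr one_pos hlam
    simp only [rpow_one] at h
    exact (h.mono_set (Ioi_subset_Ioi hx₀)).const_mul C
  refine Integrable.mono hdom ((hf.mul hpow).aestronglyMeasurable measurableSet_Ioi) ?_
  filter_upwards [ae_restrict_mem measurableSet_Ioi] with t ht
  have hpos : 0 ≤ t ^ r := rpow_nonneg (hx₀.trans ht.le) r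
  rw [norm_mul, norm_of_nonneg hpos, Real.norm_eq_abs, Real.norm_eq_abs]
  calc |f t| * t ^ r ≤ C * exp (-lam * t) * t ^ r := mul_le_mul_of_nonneg_right (hbd t ht) hpos
    _ = C * (t ^ r * exp (-lam * t)) := by ring
    _ ≤ |C * (t ^ r * exp (-lam * t))| := le_abs_self _

noncomputable def heatPolarPart (c ν : ℝ) (a : ℕ → ℝ) (N : ℕ) (t : ℝ) : ℝ :=
  c ^ (-ν) * ∑ k ∈ Finset.range N, a k * t ^ ((k : ℝ) - ν)

section HeatPolarPart

variable {c ν : ℝ} {a : ℕ → ℝ} {N : ℕ}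

lemma mul_rpow_neg_mul_sum_pow_eq_heatPolarPart (hc : 0 ≤ c) {t : ℝ} (ht : 0 < t) :
    (c * t) ^ (-ν) * ∑ k ∈ Finset.range N, a k * t ^ k = heatPolarPart c ν a N t := by
  rw [heatPolarPart, mul_rpow hc ht.le, mul_assoc, Finset.mul_sum]
  congr 1
  refine Finset.sum_congr rfl fun k _ => ?_
  rw [← rpow_natCast t k, mul_left_comm, ← rpow_add ht, neg_add_eq_sub]

lemma heatPolarPart_mul_rpow {t : ℝ} (ht : 0 < t) (r : ℝ) :
    heatPolarPart c ν a N t * t ^ r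
      = ∑ k ∈ Finset.range N, c ^ (-ν) * a k * t ^ ((k : ℝ) - ν + r) := by
  simp only [heatPolarPart, Finset.mul_sum, Finset.sum_mul, rpow_add ht]
  exact Finset.sum_congr rfl fun k _ => by ring

lemma continuousOn_heatPolarPart : ContinuousOn (heatPolarPart c ν a N) (Ioi 0) :=
  continuousOn_const.mul <| continuousOn_finsetSum _ fun _ _ =>
    continuousOn_const.mul <| continuousOn_id.rpow_const fun _ ht => Or.inl (ne_of_gt ht)

lemma integrableOn_heatPolarPart_mul_rpow {s : ℝ} (hs : ν < s) :
    IntegrableOn (fun t => heatPolarPart c ν a N t * t ^ (s - 1)) (Ioc 0 1) := by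
  refine IntegrableOn.congr_fun ?_ (fun t ht => (heatPolarPart_mul_rpow ht.1 _).symm)
    measurableSet_Ioc
  refine integrable_finsetSum _ fun k _ => (integrableOn_Ioc_zero_one_rpow ?_).const_mul _
  linarith [(k.cast_nonneg : (0 : ℝ) ≤ k)]

lemma integral_heatPolarPart_mul_rpow (hc : 0 < c) {s : ℝ} (hs : ν < s) :
    ∫ t in Ioc (0 : ℝ) 1, heatPolarPart c ν a N t * t ^ (s - 1)
      = ∑ k ∈ Finset.range N, a k / (c ^ ν * (s - ν + k)) := by
  have hexp : ∀ k : ℕ, -1 < (k : ℝ) - ν + (s - 1) := fun k => by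
    linarith [(k.cast_nonneg : (0 : ℝ) ≤ k)]
  rw [setIntegral_congr_fun measurableSet_Ioc (fun t ht => heatPolarPart_mul_rpow ht.1 _),
    integral_finsetSum _ fun k _ => (integrableOn_Ioc_zero_one_rpow (hexp k)).const_mul _]
  refine Finset.sum_congr rfl fun k _ => ?_
  rw [integral_const_mul, integral_Ioc_zero_one_rpow (hexp k), rpow_neg hc.le, div_eq_mul_inv,
    mul_inv, show (k : ℝ) - ν + (s - 1) + 1 = s - ν + k by ring]
  ring

end HeatPolarPart

theorem integral_Ioi_mul_rpow_eq_heatPolarPart_add {f : ℝ → ℝ} {c ν M C lam s : ℝ}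
    {a : ℕ → ℝ} {N : ℕ} (hc : 0 < c) (hν : 0 ≤ ν) (hs : ν < s) (hlam : 0 < lam)
    (hf : ContinuousOn f (Ioi 0))
    (hbd₀ : ∀ t ∈ Ioc (0 : ℝ) 1, |f t - heatPolarPart c ν a N t| ≤ M)
    (hbd₁ : ∀ t ∈ Ioi (1 : ℝ), |f t| ≤ C * exp (-lam * t)) :
    IntegrableOn (fun t => f t * t ^ (s - 1)) (Ioi 0) ∧
      ∫ t in Ioi (0 : ℝ), f t * t ^ (s - 1)
        = ∑ k ∈ Finset.range N, a k / (c ^ ν * (s - ν + k))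
          + (∫ t in Ioi (1 : ℝ), f t * t ^ (s - 1))
          + ∫ t in Ioc (0 : ℝ) 1, (f t - heatPolarPart c ν a N t) * t ^ (s - 1) := by
  have hr : -1 < s - 1 := by linarith
  have hrem : IntegrableOn (fun t => (f t - heatPolarPart c ν a N t) * t ^ (s - 1)) (Ioc 0 1) :=
    integrableOn_Ioc_zero_one_mul_rpow_of_abs_le
      ((hf.sub continuousOn_heatPolarPart).mono Ioc_subset_Ioi_self) hbd₀ hr
  have hpolar := integrableOn_heatPolarPart_mul_rpow (c := c) (a := a) (N := N) hs
  have hsplit : ∀ t, f t * t ^ (s - 1)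
      = (f t - heatPolarPart c ν a N t) * t ^ (s - 1) + heatPolarPart c ν a N t * t ^ (s - 1) :=
    fun t => by ring
  have hnear : IntegrableOn (fun t => f t * t ^ (s - 1)) (Ioc 0 1) :=
    (hrem.add hpolar).congr_fun (fun t _ => (hsplit t).symm) measurableSet_Ioc
  have hfar : IntegrableOn (fun t => f t * t ^ (s - 1)) (Ioi 1) :=
    integrableOn_Ioi_mul_rpow_of_abs_le_exp zero_le_one
      (hf.mono (Ioi_subset_Ioi zero_le_one)) hbd₁ hlam hr
  rw [← Ioc_union_Ioi_eq_Ioi zero_le_one]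
  refine ⟨hnear.union hfar, ?_⟩
  rw [setIntegral_union Ioc_disjoint_Ioi_same measurableSet_Ioi hnear hfar]
  simp only [hsplit]
  rw [integral_add hrem hpolar, integral_heatPolarPart_mul_rpow hc hs]
  ring

theorem heat_zeta_splitting_even_general
    (n : ℕ)
    (V C lam : ℝ) (hlam : 0 < lam)
    (a : ℕ → ℝ)
    (K : ℝ → ℝ) (hK : ContinuousOn K (Set.Ioi 0))
    (h1 : ∀ t ∈ Set.Ioc (0:ℝ) 1,
      |K t - (4 * π * t) ^ (-(n:ℝ) / 2) * ∑ k ∈ Finset.range (n / 2), a k * t ^ k| ≤ C)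
    (h2 : ∀ t : ℝ, 1 ≤ t → |K t - 1 / V| ≤ C * Real.exp (-lam * t))
    (D : ℝ → ℝ)
    (hD : ∀ t, D t = K t - 1 / V
      - (4 * π) ^ (-(n:ℝ) / 2) * ∑ k ∈ Finset.range (n / 2), a k * t ^ ((k:ℝ) - n / 2)) :
    (∀ s : ℝ, 0 < s →
      IntegrableOn (fun t => D t * t ^ (s - 1)) (Set.Ioc 0 1)) ∧
    ∀ s : ℝ, (n:ℝ) / 2 < s →
      IntegrableOn (fun t => (K t - 1 / V) * t ^ (s - 1)) (Set.Ioi 0) ∧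
      (∫ t in Set.Ioi (0:ℝ), (K t - 1 / V) * t ^ (s - 1))
        = (∑ k ∈ Finset.range (n / 2),
            a k / ((4 * π) ^ ((n:ℝ) / 2) * (s - (n:ℝ) / 2 + k)))
          + (∫ t in Set.Ioi (1:ℝ), (K t - 1 / V) * t ^ (s - 1))
          + ∫ t in Set.Ioc (0:ℝ) 1, D t * t ^ (s - 1) := by
  set P := heatPolarPart (4 * π) ((n : ℝ) / 2) a (n / 2)
  obtain rfl : D = fun t => K t - 1 / V - P t := funext fun t => by
    rw [hD, neg_div]; rfl
  have hbd₀ : ∀ t ∈ Ioc (0 : ℝ) 1, |K t - 1 / V - P t| ≤ C + |1 / V| := fun t ht => by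
    have hK₀ := h1 t ht
    rw [neg_div, mul_rpow_neg_mul_sum_pow_eq_heatPolarPart (by positivity) ht.1] at hK₀
    calc |K t - 1 / V - P t| = |(K t - P t) - 1 / V| := by ring_nf
      _ ≤ C + |1 / V| := (abs_sub _ _).trans (by linarith)
  have hK' : ContinuousOn (fun t => K t - 1 / V) (Ioi 0) := hK.sub continuousOn_const
  refine ⟨fun s hs => integrableOn_Ioc_zero_one_mul_rpow_of_abs_le
      ((hK'.sub continuousOn_heatPolarPart).mono Ioc_subset_Ioi_self) hbd₀ (by linarith),
    fun s hs => integral_Ioi_mul_rpow_eq_heatPolarPart_add (by positivity) (by positivity) hs hlam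
      hK' hbd₀ fun t ht => h2 t ht.le⟩

/-- Meromorphic continuation of `Γ(s)·ζ(s)` for the diagonal heat kernel of a
compact Riemannian manifold of even dimension `n` and volume `V`: for `s > n/2`
the Mellin-type integral `∫₀^∞ (K(t) − 1/V) t^{s−1} dt` converges absolutely
and splits as explicit pole terms plus two convergent integrals, where the
integral of `D(t) t^{s−1}` over `(0,1]` converges absolutely for all `s > 0`. -/
theorem heat_zeta_splitting_even
    (n : ℕ) (hn : 2 ≤ n) (hne : Even n)
    (V C lam : ℝ) (hV : 0 < V) (hC : 0 < C) (hlam : 0 < lam)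
    (a : ℕ → ℝ)
    (K : ℝ → ℝ) (hK : ContinuousOn K (Set.Ioi 0))
    (h1 : ∀ t ∈ Set.Ioc (0:ℝ) 1,
      |K t - (4 * π * t) ^ (-(n:ℝ) / 2) * ∑ k ∈ Finset.range (n / 2), a k * t ^ k| ≤ C)
    (h2 : ∀ t : ℝ, 1 ≤ t → |K t - 1 / V| ≤ C * Real.exp (-lam * t))
    (D : ℝ → ℝ)
    (hD : ∀ t, D t = K t - 1 / V
      - (4 * π) ^ (-(n:ℝ) / 2) * ∑ k ∈ Finset.range (n / 2), a k * t ^ ((k:ℝ) - n / 2)) :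
    (∀ s : ℝ, 0 < s →
      IntegrableOn (fun t => D t * t ^ (s - 1)) (Set.Ioc 0 1)) ∧
    ∀ s : ℝ, (n:ℝ) / 2 < s →
      IntegrableOn (fun t => (K t - 1 / V) * t ^ (s - 1)) (Set.Ioi 0) ∧
      (∫ t in Set.Ioi (0:ℝ), (K t - 1 / V) * t ^ (s - 1))
        = (∑ k ∈ Finset.range (n / 2),
            a k / ((4 * π) ^ ((n:ℝ) / 2) * (s - (n:ℝ) / 2 + k)))
          + (∫ t in Set.Ioi (1:ℝ), (K t - 1 / V) * t ^ (s - 1))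
          + ∫ t in Set.Ioc (0:ℝ) 1, D t * t ^ (s - 1) :=
  heat_zeta_splitting_even_general n V C lam hlam a K hK h1 h2 D hD
end

section
/- Let n ≥ 2 be even, V > 0, C > 0, λ > 0, and a₀, …, a_{n/2−1} real numbers. Let K : (0, ∞) → ℝ be continuous with |K(t) − (4πt)^{−n/2} Σ_{k=0}^{n/2−1} a_k t^k| ≤ C for all t ∈ (0, 1] and |K(t) − 1/V| ≤ C e^{−λt} for all t ≥ 1. Set D(t) = K(t) − 1/V − (4π)^{−n/2} Σ_{k=0}^{n/2−1} a_k t^{k−n/2}, and for real s > 0 with s ∉ {n/2 − k : 0 ≤ k ≤ n/2 − 1} define ζ(s) = (1/Γ(s)) [ Σ_{k=0}^{n/2−1} a_k / ((4π)^{n/2}(s − n/2 + k)) + ∫₁^∞ (K(t) − 1/V) t^{s−1} dt + ∫₀^1 D(t) t^{s−1} dt ]. Then lim_{s→1⁺} [ ζ(s) − a_{n/2−1}/((4π)^{n/2} Γ(s) (s−1)) ] exists and equals Σ_{k=0}^{n/2−2} a_k / ((4π)^{n/2}(1 − n/2 + k)) + ∫₁^∞ (K(t) − 1/V) dt + ∫₀^1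 D(t) dt. -/
/-!
With `m = n / 2`, the partial fraction `k = m - 1` is exactly `a_{m-1} / ((4π)^m (s - 1))`, so
subtracting the pole leaves `1 / Γ(s)` times the other partial fractions and the two Mellin-type
integrals. Each of these is continuous in `s` at `1` by dominated convergence: on `(1, ∞)` the
integrand is dominated by a power of `t` times `e^{-λ t}`, and on `(0, 1]` the remainder `D` is
bounded because the heat expansion hypothesis controls `K` up to a constant there. Since
`Γ(1) = 1`, the limit is the value of the regular part at `s = 1`.
-/

open Real MeasureTheory Filter Set Topology

theorem continuousAt_const_rpow_sub_one {t : ℝ} (ht : 0 < t) (s₀ : ℝ) :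
    ContinuousAt (fun s : ℝ => t ^ (s - 1)) s₀ :=
  (continuousAt_const_rpow ht.ne').comp (continuousAt_id.sub continuousAt_const)

theorem continuousAt_setIntegral_Ioi_mul_rpow_sub_one {f : ℝ → ℝ} {C lam : ℝ}
    (hf : ContinuousOn f (Ioi 1)) (hlam : 0 < lam)
    (hbound : ∀ t, 1 ≤ t → |f t| ≤ C * exp (-lam * t)) (s₀ : ℝ) :
    ContinuousAt (fun s => ∫ t in Ioi 1, f t * t ^ (s - 1)) s₀ := by
  have hdom : IntegrableOn (fun t : ℝ => C * (t ^ |s₀| * exp (-lam * t ^ (1:ℝ)))) (Ioi 1) :=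
    ((integrableOn_rpow_mul_exp_neg_mul_rpow (by linarith [abs_nonneg s₀]) one_pos hlam).mono_set
      (Ioi_subset_Ioi zero_le_one)).const_mul C
  refine continuousAt_of_dominated ?_ ?_ hdom ?_
  · refine Eventually.of_forall fun s => (hf.mul ?_).aestronglyMeasurable measurableSet_Ioi
    exact continuousOn_id.rpow_const fun t ht => Or.inl (zero_lt_one.trans ht).ne'
  · filter_upwards [Iio_mem_nhds (lt_add_one s₀)] with s hs
    refine (ae_restrict_iff' measurableSet_Ioi).2 (Eventually.of_forall fun t ht => ?_)
    have ht1 : (1:ℝ) ≤ t := le_of_lt ht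
    have hpow : t ^ (s - 1) ≤ t ^ |s₀| :=
      rpow_le_rpow_of_exponent_le ht1 (by linarith [hs.out, le_abs_self s₀])
    rw [norm_mul, Real.norm_eq_abs, norm_of_nonneg (rpow_nonneg (zero_le_one.trans ht1) _),
      rpow_one, mul_comm (t ^ |s₀|), ← mul_assoc]
    exact mul_le_mul (hbound t ht1) hpow (by positivity) ((abs_nonneg _).trans (hbound t ht1))
  · refine (ae_restrict_iff' measurableSet_Ioi).2 (Eventually.of_forall fun t ht => ?_)
    exact continuousAt_const.mul (continuousAt_const_rpow_sub_one (zero_lt_one.trans ht) s₀)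

theorem continuousAt_setIntegral_Ioc_mul_rpow_sub_one {f : ℝ → ℝ} {M s₀ : ℝ}
    (hf : ContinuousOn f (Ioc 0 1)) (hM : ∀ t ∈ Ioc (0:ℝ) 1, |f t| ≤ M) (hs₀ : 0 < s₀) :
    ContinuousAt (fun s => ∫ t in Ioc 0 1, f t * t ^ (s - 1)) s₀ := by
  have hM₀ : 0 ≤ M := (abs_nonneg _).trans (hM 1 ⟨one_pos, le_rfl⟩)
  have hdom : IntegrableOn (fun t : ℝ => M * t ^ (s₀ / 2 - 1)) (Ioc 0 1) :=
    ((intervalIntegrable_iff_integrableOn_Ioc_of_le zero_le_one).1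
      (intervalIntegral.intervalIntegrable_rpow' (by linarith))).const_mul M
  refine continuousAt_of_dominated ?_ ?_ hdom ?_
  · refine Eventually.of_forall fun s => (hf.mul ?_).aestronglyMeasurable measurableSet_Ioc
    exact continuousOn_id.rpow_const fun t ht => Or.inl ht.1.ne'
  · filter_upwards [Ioi_mem_nhds (half_lt_self hs₀)] with s hs
    refine (ae_restrict_iff' measurableSet_Ioc).2 (Eventually.of_forall fun t ht => ?_)
    have hpow : t ^ (s - 1) ≤ t ^ (s₀ / 2 - 1) :=
      rpow_le_rpow_of_exponent_ge ht.1 ht.2 (by linarith [hs.out])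
    rw [norm_mul, Real.norm_eq_abs, norm_of_nonneg (rpow_nonneg ht.1.le _)]
    exact mul_le_mul (hM t ht) hpow (rpow_nonneg ht.1.le _) hM₀
  · refine (ae_restrict_iff' measurableSet_Ioc).2 (Eventually.of_forall fun t ht => ?_)
    exact continuousAt_const.mul (continuousAt_const_rpow_sub_one ht.1 s₀)

theorem rpow_neg_mul_sum_rpow_sub {x t : ℝ} (hx : 0 ≤ x) (ht : 0 < t) (r : ℝ) (a : ℕ → ℝ)
    (s : Finset ℕ) :
    x ^ (-r) * ∑ k ∈ s, a k * t ^ ((k:ℝ) - r) = (x * t) ^ (-r) * ∑ k ∈ s, a k * t ^ k := by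
  rw [mul_rpow hx ht.le, mul_assoc]
  congr 1
  rw [Finset.mul_sum]
  refine Finset.sum_congr rfl fun k _ => ?_
  rw [sub_eq_neg_add, rpow_add ht, rpow_natCast]
  ring

theorem sum_range_div_eq_add_div_sub_one (a : ℕ → ℝ) (c s : ℝ) {m : ℕ} (hm : 1 ≤ m) :
    ∑ k ∈ Finset.range m, a k / (c * (s - (m:ℝ) + k))
      = ∑ k ∈ Finset.range (m - 1), a k / (c * (s - (m:ℝ) + k)) + a (m - 1) / (c * (s - 1)) := by
  obtain ⟨j, rfl⟩ := Nat.exists_eq_add_of_le' hm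
  rw [Finset.sum_range_succ, Nat.add_sub_cancel]
  push_cast
  ring

theorem continuousAt_sum_div_mul_sub_add (a : ℕ → ℝ) {c r s₀ : ℝ} (hc : c ≠ 0) {S : Finset ℕ}
    (hS : ∀ k ∈ S, s₀ - r + k ≠ 0) :
    ContinuousAt (fun s => ∑ k ∈ S, a k / (c * (s - r + k))) s₀ :=
  tendsto_finsetSum _ fun k hk => continuousAt_const.div (by fun_prop) (mul_ne_zero hc (hS k hk))

theorem tendsto_sub_pole_of_eq_one_div_Gamma_mul {ζ F : ℝ → ℝ} {a c : ℝ} (hF : ContinuousAt F 1)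
    (hζ : ∀ᶠ s in 𝓝[>] 1, ζ s = 1 / Gamma s * (F s + a / (c * (s - 1)))) :
    Tendsto (fun s => ζ s - a / (c * Gamma s * (s - 1))) (𝓝[>] 1) (𝓝 (F 1)) := by
  have hΓ : ContinuousAt (fun s => 1 / Gamma s) 1 :=
    continuousAt_const.div
      (differentiableOn_Gamma_Ioi.differentiableAt (Ioi_mem_nhds one_pos)).continuousAt (by simp)
  have hlim : Tendsto (fun s => 1 / Gamma s * F s) (𝓝[>] 1) (𝓝 (F 1)) := by
    simpa using (hΓ.tendsto.mul hF.tendsto).mono_left nhdsWithin_le_nhds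
  refine hlim.congr' (hζ.mono fun s hs => ?_)
  dsimp only
  rw [hs, show a / (c * Gamma s * (s - 1)) = 1 / Gamma s * (a / (c * (s - 1))) by
    rw [mul_right_comm, ← div_div, div_eq_inv_mul, one_div]]
  ring

theorem heat_zeta_regularized_value_at_one_general
    (n : ℕ) (hn : 2 ≤ n) (hne : Even n)
    (V C lam : ℝ) (hlam : 0 < lam)
    (a : ℕ → ℝ)
    (K : ℝ → ℝ) (hK : ContinuousOn K (Set.Ioi 0))
    (h1 : ∀ t ∈ Set.Ioc (0:ℝ) 1,
      |K t - (4 * π * t) ^ (-(n:ℝ) / 2) * ∑ k ∈ Finset.range (n / 2), a k * t ^ k| ≤ C)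
    (h2 : ∀ t : ℝ, 1 ≤ t → |K t - 1 / V| ≤ C * Real.exp (-lam * t))
    (D : ℝ → ℝ)
    (hD : ∀ t, D t = K t - 1 / V
      - (4 * π) ^ (-(n:ℝ) / 2) * ∑ k ∈ Finset.range (n / 2), a k * t ^ ((k:ℝ) - n / 2))
    (zeta : ℝ → ℝ)
    (hzeta : ∀ s : ℝ, 0 < s → (∀ k ∈ Finset.range (n / 2), s ≠ (n:ℝ) / 2 - k) →
      zeta s = (1 / Real.Gamma s) *
        ((∑ k ∈ Finset.range (n / 2),
            a k / ((4 * π) ^ ((n:ℝ) / 2) * (s - (n:ℝ) / 2 + k)))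
          + (∫ t in Set.Ioi (1:ℝ), (K t - 1 / V) * t ^ (s - 1))
          + ∫ t in Set.Ioc (0:ℝ) 1, D t * t ^ (s - 1))) :
    Tendsto (fun s : ℝ =>
        zeta s - a (n / 2 - 1) / ((4 * π) ^ ((n:ℝ) / 2) * Real.Gamma s * (s - 1)))
      (nhdsWithin 1 (Set.Ioi 1))
      (nhds ((∑ k ∈ Finset.range (n / 2 - 1),
          a k / ((4 * π) ^ ((n:ℝ) / 2) * (1 - (n:ℝ) / 2 + k)))
        + (∫ t in Set.Ioi (1:ℝ), (K t - 1 / V))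
        + ∫ t in Set.Ioc (0:ℝ) 1, D t)) := by
  set m := n / 2
  have hm₁ : 1 ≤ m := by omega
  have hnm : (n:ℝ) / 2 = m := (Nat.cast_div_charZero hne.two_dvd).symm
  have hD_bound : ∀ t ∈ Ioc (0:ℝ) 1, |D t| ≤ C + |1 / V| := fun t ht => by
    rw [hD, sub_right_comm, neg_div, rpow_neg_mul_sum_rpow_sub (by positivity) ht.1, ← neg_div]
    exact (abs_sub _ _).trans (add_le_add_left (h1 t ht) _)
  have hD_cont : ContinuousOn D (Ioc 0 1) := by
    refine ContinuousOn.congr ?_ fun t _ => hD t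
    refine ((hK.mono Ioc_subset_Ioi_self).sub continuousOn_const).sub
      (continuousOn_const.mul (continuousOn_finsetSum _ fun k _ => continuousOn_const.mul ?_))
    exact continuousOn_id.rpow_const fun t ht => Or.inl ht.1.ne'
  rw [hnm] at hzeta ⊢
  set c : ℝ := (4 * π) ^ (m:ℝ)
  have hsum := continuousAt_sum_div_mul_sub_add a (c := c) (r := m) (s₀ := 1)
    (rpow_pos_of_pos (by positivity) _).ne' (S := Finset.range (m - 1)) fun k hk => by
      have hk : (k:ℝ) + 2 ≤ m := by exact_mod_cast (by simp at hk; omega : k + 2 ≤ m)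
      linarith
  have htail := continuousAt_setIntegral_Ioi_mul_rpow_sub_one (f := fun t => K t - 1 / V)
    ((hK.mono (Ioi_subset_Ioi zero_le_one)).sub continuousOn_const) hlam h2 1
  have hsmall := continuousAt_setIntegral_Ioc_mul_rpow_sub_one hD_cont hD_bound one_pos
  convert tendsto_sub_pole_of_eq_one_div_Gamma_mul ((hsum.add htail).add hsmall) ?_ using 2
  · simp only [Pi.add_apply, sub_self, rpow_zero, mul_one]
  filter_upwards [Ioo_mem_nhdsGT one_lt_two] with s hs
  have hsne : ∀ k ∈ Finset.range m, s ≠ m - k := fun k _ hs_eq => by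
    have hk₁ : k + 1 < m := by exact_mod_cast (by linarith [hs.1] : (k:ℝ) + 1 < m)
    have hk₂ : m < k + 2 := by exact_mod_cast (by linarith [hs.2] : (m:ℝ) < k + 2)
    omega
  rw [hzeta s (by linarith [hs.1]) hsne, sum_range_div_eq_add_div_sub_one _ _ _ hm₁,
    Pi.add_apply, Pi.add_apply]
  ring

/-- The analytically continued diagonal Minakshisundaram–Pleijel zeta function
(of the diagonal heat kernel of a compact Riemannian manifold of even
dimension `n` and volume `V`) has a simple pole at `s = 1`:
`lim_{s→1⁺} [ζ(s) − a_{n/2−1}/((4π)^{n/2} Γ(s)(s−1))]` exists and equals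
the displayed finite part. -/
theorem heat_zeta_regularized_value_at_one
    (n : ℕ) (hn : 2 ≤ n) (hne : Even n)
    (V C lam : ℝ) (hV : 0 < V) (hC : 0 < C) (hlam : 0 < lam)
    (a : ℕ → ℝ)
    (K : ℝ → ℝ) (hK : ContinuousOn K (Set.Ioi 0))
    (h1 : ∀ t ∈ Set.Ioc (0:ℝ) 1,
      |K t - (4 * π * t) ^ (-(n:ℝ) / 2) * ∑ k ∈ Finset.range (n / 2), a k * t ^ k| ≤ C)
    (h2 : ∀ t : ℝ, 1 ≤ t → |K t - 1 / V| ≤ C * Real.exp (-lam * t))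
    (D : ℝ → ℝ)
    (hD : ∀ t, D t = K t - 1 / V
      - (4 * π) ^ (-(n:ℝ) / 2) * ∑ k ∈ Finset.range (n / 2), a k * t ^ ((k:ℝ) - n / 2))
    (zeta : ℝ → ℝ)
    (hzeta : ∀ s : ℝ, 0 < s → (∀ k ∈ Finset.range (n / 2), s ≠ (n:ℝ) / 2 - k) →
      zeta s = (1 / Real.Gamma s) *
        ((∑ k ∈ Finset.range (n / 2),
            a k / ((4 * π) ^ ((n:ℝ) / 2) * (s - (n:ℝ) / 2 + k)))
          + (∫ t in Set.Ioi (1:ℝ), (K t - 1 / V) * t ^ (s - 1))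
          + ∫ t in Set.Ioc (0:ℝ) 1, D t * t ^ (s - 1))) :
    Tendsto (fun s : ℝ =>
        zeta s - a (n / 2 - 1) / ((4 * π) ^ ((n:ℝ) / 2) * Real.Gamma s * (s - 1)))
      (nhdsWithin 1 (Set.Ioi 1))
      (nhds ((∑ k ∈ Finset.range (n / 2 - 1),
          a k / ((4 * π) ^ ((n:ℝ) / 2) * (1 - (n:ℝ) / 2 + k)))
        + (∫ t in Set.Ioi (1:ℝ), (K t - 1 / V))
        + ∫ t in Set.Ioc (0:ℝ) 1, D t)) :=
  heat_zeta_regularized_value_at_one_general n hn hne V C lam hlam a K hK h1 h2 D hD zeta hzeta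
end
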